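/- arXiv:1905.00473 — 4 statements merged into one kernel-verified Lean document; each statement's English description precedes it below -/
import Mathlib

section
/- Let M = F Gᵀ for real matrices F, G ∈ ℝ^{m×n} and suppose M = X Σ Yᵀ is a singular value decomposition of M. Then for the orthogonal matrix Ω* = X Yᵀ, one has ‖F - Ω* G‖_F² = ‖F‖_F² + ‖G‖_F² - 2·trace(Σ). -/
open Matrix

/-- Squared Frobenius norm of a real matrix. -/
def frobSq {m n : ℕ} (A : Matrix (Fin m) (Fin n) ℝ) : ℝ :=
  ∑ i, ∑ j, (A i j) ^ 2

lemma frobSq_eq_trace {m n : ℕ} (A : Matrix (Fin m) (Fin n) ℝ) :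
    frobSq A = Matrix.trace (A * Aᵀ) := by
  simp [frobSq, Matrix.trace, Matrix.diag, Matrix.mul_apply, Matrix.transpose_apply, sq]

theorem frobSq_procrustes_residual {m n : ℕ}
    (F G : Matrix (Fin m) (Fin n) ℝ)
    (X Y S : Matrix (Fin m) (Fin m) ℝ)
    (hX1 : Xᵀ * X = 1) (hX2 : X * Xᵀ = 1)
    (hY1 : Yᵀ * Y = 1) (hY2 : Y * Yᵀ = 1)
    (hSdiag : ∀ i j, i ≠ j → S i j = 0)
    (hSpos : ∀ i, 0 ≤ S i i)
    (hSVD : F * Gᵀ = X * S * Yᵀ) :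
    frobSq (F - (X * Yᵀ) * G) =
      frobSq F + frobSq G - 2 * Matrix.trace S := by
  set Ω : Matrix (Fin m) (Fin m) ℝ := X * Yᵀ with hΩdef
  have hΩ1 : Ωᵀ * Ω = 1 := by
    simp only [hΩdef, Matrix.transpose_mul, Matrix.transpose_transpose]
    rw [Matrix.mul_assoc, ← Matrix.mul_assoc Xᵀ X Yᵀ, hX1, Matrix.one_mul, hY2]
  have h1 : Matrix.trace (F * Gᵀ * Ωᵀ) = Matrix.trace S := by
    rw [hSVD]
    simp only [hΩdef, Matrix.transpose_mul, Matrix.transpose_transpose]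
    have : X * S * Yᵀ * (Y * Xᵀ) = X * S * Xᵀ := by
      rw [Matrix.mul_assoc (X*S) Yᵀ _, ← Matrix.mul_assoc Yᵀ Y Xᵀ, hY1, Matrix.one_mul]
    rw [this, Matrix.trace_mul_comm, ← Matrix.mul_assoc, hX1, Matrix.one_mul]
  have h2 : Matrix.trace (Ω * G * Fᵀ) = Matrix.trace S := by
    have : (Ω * G * Fᵀ)ᵀ = F * Gᵀ * Ωᵀ := by
      simp [Matrix.transpose_mul, Matrix.mul_assoc]
    rw [← Matrix.trace_transpose (Ω * G * Fᵀ), this, h1]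
  have h3 : Matrix.trace (Ω * G * (Gᵀ * Ωᵀ)) = Matrix.trace (G * Gᵀ) := by
    rw [Matrix.trace_mul_comm]
    have hcancel : Ωᵀ * (Ω * G) = G := by
      rw [← Matrix.mul_assoc, hΩ1, Matrix.one_mul]
    have : Gᵀ * Ωᵀ * (Ω * G) = Gᵀ * G := by
      rw [Matrix.mul_assoc, hcancel]
    rw [this, Matrix.trace_mul_comm]
  have expand : (F - Ω * G) * (F - Ω * G)ᵀ
      = F * Fᵀ - F * (Gᵀ * Ωᵀ) - Ω * G * Fᵀ + Ω * G * (Gᵀ * Ωᵀ) := by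
    simp only [Matrix.transpose_sub, Matrix.transpose_mul, Matrix.sub_mul, Matrix.mul_sub,
      Matrix.mul_assoc]
    abel
  rw [frobSq_eq_trace, expand, Matrix.trace_add, Matrix.trace_sub, Matrix.trace_sub,
    frobSq_eq_trace F, frobSq_eq_trace G, ← Matrix.mul_assoc F Gᵀ Ωᵀ, h1, h2, h3]
  ring
end

section
/- Let E_k := max_{j ≤ N} e^k_j where nonnegative reals e^k_j satisfy, for all n < N, e^k_{n+1} ≤ e^k_n + ε + r_{n+1} + λ(E_{k-1} + ε) with e^k_0 = e_0, Σ_{j=1}^N r_j ≤ Cη, 0 ≤ λN < 1. Then E_k ≤ (λNε + e_0 + (N+1)ε + Cη)/(1 - λN) for all k, provided E_1 satisfies the same recursive bound. -/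
theorem energy_stability_abstract
    (N : ℕ) (e : ℕ → ℕ → ℝ) (r : ℕ → ℝ) (e0 ε lam C η : ℝ)
    (he_nonneg : ∀ k j, 0 ≤ e k j)
    (hε : 0 ≤ ε) (hlam : 0 ≤ lam) (hr : ∀ j, 0 ≤ r j)
    (E : ℕ → ℝ)
    (hE : ∀ k, E k = (Finset.range (N + 1)).sup' Finset.nonempty_range_add_one (fun j => e k j))
    (he0 : ∀ k, e k 0 = e0)
    (hrec : ∀ k, 1 ≤ k → ∀ n, n < N →
      e k (n + 1) ≤ e k n + ε + r (n + 1) + lam * (E (k - 1) + ε))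
    (hres : ∑ j ∈ Finset.Icc 1 N, r j ≤ C * η)
    (hlamN : lam * N < 1)
    (hbase : E 1 ≤ (lam * N * ε + e0 + (N + 1) * ε + C * η) / (1 - lam * N)) :
    ∀ k, 1 ≤ k →
      E k ≤ (lam * N * ε + e0 + (N + 1) * ε + C * η) / (1 - lam * N) := by
  set B := (lam * N * ε + e0 + (N + 1) * ε + C * η) / (1 - lam * N) with hB
  have h1 : 0 < 1 - lam * N := by linarith
  have hEnn : ∀ k, 0 ≤ E k := by
    intro k
    rw [hE k]
    exact le_trans (he_nonneg k 0)
      (Finset.le_sup' (fun j => e k j) (by simp : 0 ∈ Finset.range (N + 1)))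
  have he0nn : 0 ≤ e0 := (he0 0) ▸ he_nonneg 0 0
  have hcancel : (1 - lam * N) * B = lam * N * ε + e0 + (N + 1) * ε + C * η := by
    rw [hB, mul_div_cancel₀ _ (ne_of_gt h1)]
  have key : ∀ k, 1 ≤ k → E (k - 1) ≤ B → E k ≤ B := by
    intro k hk hprev
    have hEp : 0 ≤ E (k - 1) + ε := by linarith [hEnn (k - 1)]
    have hstep : ∀ n, n ≤ N → e k n ≤ e0 + n * ε + (∑ j ∈ Finset.Icc 1 n, r j)
        + n * (lam * (E (k - 1) + ε)) := by
      intro n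
      induction n with
      | zero =>
        intro _
        simp [he0 k]
      | succ n ih =>
        intro hn
        have hn' : n ≤ N := Nat.le_of_succ_le hn
        have h2 := hrec k hk n hn
        have h3 := ih hn'
        have hsum : ∑ j ∈ Finset.Icc 1 (n + 1), r j
            = (∑ j ∈ Finset.Icc 1 n, r j) + r (n + 1) :=
          Finset.sum_Icc_succ_top (by omega) _
        have hcast : ((n + 1 : ℕ) : ℝ) = (n : ℝ) + 1 := by push_cast; ring
        rw [hsum, hcast]
        nlinarith [mul_nonneg hlam hEp]
    have hEk : E k ≤ e0 + N * ε + C * η + N * (lam * (E (k - 1) + ε)) := by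
      rw [hE k]
      apply Finset.sup'_le
      intro j hj
      have hjN : j ≤ N := by simpa [Nat.lt_succ_iff] using hj
      have h4 := hstep j hjN
      have hsub : ∑ i ∈ Finset.Icc 1 j, r i ≤ ∑ i ∈ Finset.Icc 1 N, r i :=
        Finset.sum_le_sum_of_subset_of_nonneg
          (Finset.Icc_subset_Icc_right hjN) (fun i _ _ => hr i)
      have hjc : (j : ℝ) ≤ (N : ℝ) := by exact_mod_cast hjN
      nlinarith [mul_nonneg hlam hEp]
    have hfinal : e0 + N * ε + C * η + N * (lam * (E (k - 1) + ε)) ≤ B := by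
      have hNn : (0 : ℝ) ≤ (N : ℝ) := Nat.cast_nonneg N
      nlinarith [mul_nonneg (mul_nonneg hNn hlam) (sub_nonneg.mpr hprev)]
    linarith
  intro k hk
  induction k, hk using Nat.le_induction with
  | base => exact hbase
  | succ n hn ih =>
    have := key (n + 1) (by omega) (by simpa using ih)
    exact this
end

section
/- Suppose for all wave field pairs, ‖Λθ𝒞ℛ(v,v̇) - Λθ𝒞ℛ(w,ẇ)‖ ≤ (1+ε_θ)‖Λ(v-w, v̇-ẇ)‖ and ‖(Λℱ - Λθ𝒞ℛ)(v,v̇) - (Λℱ - Λθ𝒞ℛ)(w,ẇ)‖ ≤ κ‖Λ(v-w, v̇-ẇ)‖. Then the parareal iterates u^k satisfy max_{j≤N} ℰ^k_j ≤ κ·((1+ε_θ)^N - 1)/ε_θ · max_{j≤N} ℰ^{k-1}_j, where ℰ^k_n = ‖Λ(u^k_n - u(t_n), u̇^k_n - u̇(t_n))‖. -/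
open Finset in
theorem parareal_energy_convergence
    {X Y : Type*} [NormedAddCommGroup X] [NormedSpace ℝ X]
    [NormedAddCommGroup Y] [NormedSpace ℝ Y]
    (Λ : X →ₗ[ℝ] Y) (F B : X →ₗ[ℝ] X)      -- fine propagator, corrected coarse θ𝒞ℛ
    (εθ κ : ℝ) (hεθ : 0 < εθ)
    (hB : ∀ v w : X, ‖Λ (B v) - Λ (B w)‖ ≤ (1 + εθ) * ‖Λ (v - w)‖)
    (hAB : ∀ v w : X, ‖(Λ (F v) - Λ (B v)) - (Λ (F w) - Λ (B w))‖ ≤ κ * ‖Λ (v - w)‖)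
    (N : ℕ) (u0 : X) (u : ℕ → ℕ → X)
    (hu0 : ∀ k, u k 0 = u0)
    (hrec : ∀ k, 1 ≤ k → ∀ n,
      u k (n + 1) = B (u k n) + F (u (k - 1) n) - B (u (k - 1) n))
    (ℰ : ℕ → ℕ → ℝ)
    (hℰ : ∀ k n, ℰ k n = ‖Λ (u k n - (F ^ n) u0)‖) :
    ∀ k, 1 ≤ k →
      (range (N + 1)).sup' Finset.nonempty_range_add_one (fun j => ℰ k j) ≤
        κ * ((1 + εθ) ^ N - 1) / εθ *
          (range (N + 1)).sup' Finset.nonempty_range_add_one (fun j => ℰ (k - 1) j) := by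
  intro k hk
  set M := (range (N + 1)).sup' Finset.nonempty_range_add_one (fun j => ℰ (k - 1) j) with hM
  have hE0 : ∀ m n, 0 ≤ ℰ m n := fun m n => (hℰ m n) ▸ norm_nonneg _
  set C := κ * M with hC
  have hκE : ∀ n, 0 ≤ κ * ℰ (k - 1) n := by
    intro n
    rw [hℰ]
    exact le_trans (norm_nonneg _) (hAB _ _)
  have hCnn : 0 ≤ C := by
    obtain ⟨j, hj, hjM⟩ := Finset.exists_mem_eq_sup' Finset.nonempty_range_add_one
      (fun j => ℰ (k - 1) j)
    rw [hC, hM, hjM]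
    exact hκE j
  have hκEC : ∀ n, n ∈ range (N + 1) → κ * ℰ (k - 1) n ≤ C := by
    intro n hn
    rcases le_or_gt 0 κ with h | h
    · exact mul_le_mul_of_nonneg_left (Finset.le_sup' (fun j => ℰ (k - 1) j) hn) h
    · have h2 : κ * ℰ (k - 1) n ≤ 0 := mul_nonpos_iff.2 (Or.inr ⟨h.le, hE0 _ _⟩)
      linarith
  have key : ∀ n, n ≤ N → ℰ k n ≤ C * ((1 + εθ) ^ n - 1) / εθ := by
    intro n
    induction n with
    | zero =>
      intro _
      rw [hℰ, hu0 k]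
      simp
    | succ n ih =>
      intro hn
      have hn' : n ≤ N := Nat.le_of_succ_le hn
      have step : ‖Λ (u k (n + 1) - (F ^ (n + 1)) u0)‖ ≤
          (1 + εθ) * ‖Λ (u k n - (F ^ n) u0)‖ + κ * ‖Λ (u (k - 1) n - (F ^ n) u0)‖ := by
        rw [hrec k hk n, pow_succ', Module.End.mul_apply]
        have decomp : Λ (B (u k n) + F (u (k - 1) n) - B (u (k - 1) n) - F ((F ^ n) u0)) =
            (Λ (B (u k n)) - Λ (B ((F ^ n) u0))) +
              ((Λ (F (u (k - 1) n)) - Λ (B (u (k - 1) n))) -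
                (Λ (F ((F ^ n) u0)) - Λ (B ((F ^ n) u0)))) := by
          simp only [map_add, map_sub]
          abel
        rw [decomp]
        calc _ ≤ ‖Λ (B (u k n)) - Λ (B ((F ^ n) u0))‖ +
              ‖(Λ (F (u (k - 1) n)) - Λ (B (u (k - 1) n))) -
                (Λ (F ((F ^ n) u0)) - Λ (B ((F ^ n) u0)))‖ := norm_add_le _ _
          _ ≤ _ := add_le_add (hB _ _) (hAB _ _)
      have step' : ℰ k (n + 1) ≤ (1 + εθ) * ℰ k n + κ * ℰ (k - 1) n := by
        rw [hℰ k (n + 1), hℰ k n, hℰ (k - 1) n]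
        exact step
      have h1 := ih hn'
      have h2 := hκEC n (mem_range.2 (Nat.lt_succ_of_le hn'))
      have halg : (1 + εθ) * (C * ((1 + εθ) ^ n - 1) / εθ) + C =
          C * ((1 + εθ) ^ (n + 1) - 1) / εθ := by
        field_simp
        ring
      calc ℰ k (n + 1) ≤ (1 + εθ) * ℰ k n + κ * ℰ (k - 1) n := step'
        _ ≤ (1 + εθ) * (C * ((1 + εθ) ^ n - 1) / εθ) + C :=
            add_le_add (mul_le_mul_of_nonneg_left h1 (by linarith)) h2
        _ = C * ((1 + εθ) ^ (n + 1) - 1) / εθ := halg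
  apply Finset.sup'_le
  intro j hj
  have hjN : j ≤ N := Nat.lt_succ_iff.mp (mem_range.mp hj)
  calc ℰ k j ≤ C * ((1 + εθ) ^ j - 1) / εθ := key j hjN
    _ ≤ C * ((1 + εθ) ^ N - 1) / εθ := by
        gcongr
        · linarith
    _ = κ * ((1 + εθ) ^ N - 1) / εθ * M := by rw [hC]; ring
end

section
/- Let Ω be orthogonal, ‖ΛΛ†‖ ≤ 1, and suppose ℰ(𝒞(U,Ů)) ≤ ℰ(U,Ů) + ε where ℰ(U,Ů) = ‖Λ(U,Ů)‖₂. Then the one-step parareal update satisfies ℰ(U^k_{n+1}, Ů^k_{n+1}) ≤ ℰ(U^k_n, Ů^k_n) + ε + ‖f_{n+1} - Ω g_{n+1}‖₂ + ‖1 - ΛΛ†‖ (ℰ(U^{k-1}_n, Ů^{k-1}_n) + ε), where f_{n+1} = Λℛℱ(u^{k-1}_n, u̇^{k-1}_n) and g_{n+1} = Λ𝒞(U^{k-1}_n, Ů^{k-1}_n). -/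
/-- One-step energy estimate for the phase-corrected parareal update. -/
theorem one_step_parareal_energy_estimate
    {X Xf Y : Type*} [NormedAddCommGroup X] [NormedSpace ℝ X]
    [NormedAddCommGroup Xf] [NormedSpace ℝ Xf]
    [NormedAddCommGroup Y] [NormedSpace ℝ Y]
    (Λ : X →L[ℝ] Y)        -- energy components of coarse-grid wave field pairs
    (C : X →L[ℝ] X)        -- coarse propagator
    (P : Y →L[ℝ] Y)        -- ΛΛ†
    (Ω : Y →L[ℝ] Y)        -- phase corrector (orthogonal)
    (R : Xf →L[ℝ] X) (Fp : Xf →L[ℝ] Xf)  -- restriction and fine propagator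
    (ε lam : ℝ) (hε : 0 ≤ ε) (hlam : 0 ≤ lam)
    (hΩ : ∀ y : Y, ‖Ω y‖ = ‖y‖)
    (hP : ∀ y : Y, ‖P y‖ ≤ ‖y‖)
    (hC : ∀ x : X, ‖Λ (C x)‖ ≤ ‖Λ x‖ + ε)
    (hlamP : ∀ y : Y, ‖y - P y‖ ≤ lam * ‖y‖)
    (k n : ℕ) (U : ℕ → ℕ → X) (u : ℕ → ℕ → Xf) (f g : ℕ → Y)
    (hf : f (n + 1) = Λ (R (Fp (u (k - 1) n))))
    (hg : g (n + 1) = Λ (C (U (k - 1) n)))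
    (hupdate : Λ (U k (n + 1)) =
      P (Ω (Λ (C (U k n)))) + f (n + 1) - P (Ω (Λ (C (U (k - 1) n))))) :
    ‖Λ (U k (n + 1))‖ ≤ ‖Λ (U k n)‖ + ε + ‖f (n + 1) - Ω (g (n + 1))‖ +
      lam * (‖Λ (U (k - 1) n)‖ + ε) := by
  set a := Λ (C (U k n))
  set b := Λ (C (U (k - 1) n))
  have hb : b = g (n + 1) := by rw [hg]
  have key : Λ (U k (n + 1)) =
      P (Ω a) + (f (n + 1) - Ω b) + (Ω b - P (Ω b)) := by
    rw [hupdate]; abel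
  calc ‖Λ (U k (n + 1))‖
      ≤ ‖P (Ω a) + (f (n + 1) - Ω b)‖ + ‖Ω b - P (Ω b)‖ := by
        rw [key]; exact norm_add_le _ _
    _ ≤ ‖P (Ω a)‖ + ‖f (n + 1) - Ω b‖ + ‖Ω b - P (Ω b)‖ := by
        gcongr; exact norm_add_le _ _
    _ ≤ ‖a‖ + ‖f (n + 1) - Ω (g (n + 1))‖ + lam * ‖b‖ := by
        rw [hb]
        gcongr
        · calc ‖P (Ω a)‖ ≤ ‖Ω a‖ := hP _
            _ = ‖a‖ := hΩ _
        · calc ‖Ω (g (n+1)) - P (Ω (g (n+1)))‖ ≤ lam * ‖Ω (g (n+1))‖ := hlamP _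
            _ = lam * ‖g (n+1)‖ := by rw [hΩ]
    _ ≤ (‖Λ (U k n)‖ + ε) + ‖f (n + 1) - Ω (g (n + 1))‖ +
        lam * (‖Λ (U (k - 1) n)‖ + ε) := by
        gcongr
        · exact hC _
        · exact hC _
    _ = ‖Λ (U k n)‖ + ε + ‖f (n + 1) - Ω (g (n + 1))‖ +
        lam * (‖Λ (U (k - 1) n)‖ + ε) := by ring
end
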